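/- arXiv:1610.02725 — 5 statements merged into one kernel-verified Lean document; each statement's English description precedes it below -/
import Mathlib

section
/- Let m = N·v and let vectors in ℝ^m be partitioned into N blocks of size v. Let A be a symmetric positive semidefinite m×m real matrix, let τ > 0 and λ > 0, let B ∈ ℝ^m, and suppose every eigenvalue of I − τ²A has absolute value at most ξ, where 0 ≤ ξ < 1. Define the EM iteration map F : ℝ^m → ℝ^m by F(β) = S_{λτ²}((I − τ²A)β + τ²B), where S_{λτ²} acts blockwise by sending the block r_d to [1 − λτ²/‖r_d‖₂]₊ · r_d (and to 0 when r_d = 0). Then F is a contraction with Lipschitz constant ξ: for all β₁, β₂ ∈ ℝ^m, ‖F(β₁) − F(β₂)‖₂ ≤ ξ‖β₁ − β₂‖₂. -/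
open scoped BigOperators

/-- Euclidean norm of the `d`-th block (of size `v`) of a vector in `ℝ^(N·v)`. -/
noncomputable def blockNorm {N v : ℕ} (r : Fin N × Fin v → ℝ) (d : Fin N) : ℝ :=
  Real.sqrt (∑ j, r (d, j) ^ 2)

/-- Blockwise group soft-thresholding with threshold `c`:
the `d`-th block `r_d` is mapped to `[1 - c/‖r_d‖₂]₊ • r_d`. -/
noncomputable def softThresh {N v : ℕ} (c : ℝ) (r : Fin N × Fin v → ℝ) :
    Fin N × Fin v → ℝ :=
  fun p => (if blockNorm r p.1 ≤ c then 0 else 1 - c / blockNorm r p.1) * r p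

lemma herm_mulVec_bound {n : Type*} [Fintype n] [DecidableEq n]
    (M : Matrix n n ℝ) (hM : M.IsHermitian) (ξ : ℝ) (hξ : 0 ≤ ξ)
    (h : ∀ i, |hM.eigenvalues i| ≤ ξ) (w : n → ℝ) :
    Real.sqrt (∑ p, (M.mulVec w p) ^ 2) ≤ ξ * Real.sqrt (∑ p, (w p) ^ 2) := by
  set b := hM.eigenvectorBasis with hb
  have hsym := (Matrix.isHermitian_iff_isSymmetric.1 hM)
  set T := Matrix.toEuclideanLin M with hT
  let W : EuclideanSpace ℝ n := (WithLp.equiv 2 _).symm w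
  have hTW : T W = (WithLp.equiv 2 _).symm (M.mulVec w) := by
    rw [hT, Matrix.toEuclideanLin_apply]
    rfl
  have normeq : ∀ x : EuclideanSpace ℝ n, ‖x‖ = Real.sqrt (∑ i, (b.repr x i) ^ 2) := by
    intro x
    rw [← b.repr.norm_map x, EuclideanSpace.norm_eq]
    simp [Real.norm_eq_abs, sq_abs]
  have hreprT : ∀ i, b.repr (T W) i = hM.eigenvalues i * b.repr W i := by
    intro i
    rw [b.repr_apply_apply, b.repr_apply_apply, ← hsym (b i) W]
    have hev : T (b i) = hM.eigenvalues i • (b i) := by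
      apply (WithLp.equiv 2 (n → ℝ)).injective
      have := hM.mulVec_eigenvectorBasis i
      simpa [hT, Matrix.toEuclideanLin_apply] using this
    rw [hev, real_inner_smul_left]
  have hnorm1 : Real.sqrt (∑ p, (M.mulVec w p) ^ 2) = ‖T W‖ := by
    rw [hTW, EuclideanSpace.norm_eq]
    simp [Real.norm_eq_abs, sq_abs]
  have hnorm2 : Real.sqrt (∑ p, (w p) ^ 2) = ‖W‖ := by
    rw [EuclideanSpace.norm_eq]
    simp [Real.norm_eq_abs, sq_abs, W]
  rw [hnorm1, hnorm2, normeq (T W), normeq W]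
  calc Real.sqrt (∑ i, (b.repr (T W) i) ^ 2)
      ≤ Real.sqrt (∑ i, ξ ^ 2 * (b.repr W i) ^ 2) := by
        apply Real.sqrt_le_sqrt
        apply Finset.sum_le_sum
        intro i _
        rw [hreprT i, mul_pow]
        have : hM.eigenvalues i ^ 2 ≤ ξ ^ 2 := by
          rw [← sq_abs]
          exact pow_le_pow_left₀ (abs_nonneg _) (h i) 2
        nlinarith [sq_nonneg (b.repr W i)]
    _ = ξ * Real.sqrt (∑ i, (b.repr W i) ^ 2) := by
        rw [← Finset.mul_sum, Real.sqrt_mul (sq_nonneg ξ), Real.sqrt_sq hξ]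

lemma shrink_nonexpansive {v : ℕ} (c : ℝ) (hc : 0 ≤ c) (a b : Fin v → ℝ) :
    ∑ j, ((if Real.sqrt (∑ i, a i ^ 2) ≤ c then 0 else 1 - c / Real.sqrt (∑ i, a i ^ 2)) * a j
        - (if Real.sqrt (∑ i, b i ^ 2) ≤ c then 0 else 1 - c / Real.sqrt (∑ i, b i ^ 2)) * b j) ^ 2
      ≤ ∑ j, (a j - b j) ^ 2 := by
  set Sa := ∑ i, a i ^ 2 with hSa
  set Sb := ∑ i, b i ^ 2 with hSb
  have hSa0 : 0 ≤ Sa := Finset.sum_nonneg fun i _ => sq_nonneg _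
  have hSb0 : 0 ≤ Sb := Finset.sum_nonneg fun i _ => sq_nonneg _
  set na := Real.sqrt Sa with hna
  set nb := Real.sqrt Sb with hnb
  have hna0 : 0 ≤ na := Real.sqrt_nonneg _
  have hnb0 : 0 ≤ nb := Real.sqrt_nonneg _
  have hna2 : na ^ 2 = Sa := Real.sq_sqrt hSa0
  have hnb2 : nb ^ 2 = Sb := Real.sq_sqrt hSb0
  set ta := (if na ≤ c then (0:ℝ) else 1 - c / na) with hta
  set tb := (if nb ≤ c then (0:ℝ) else 1 - c / nb) with htb
  have hbnd : ∀ (n t : ℝ), 0 ≤ n → t = (if n ≤ c then (0:ℝ) else 1 - c / n) →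
      0 ≤ t ∧ t ≤ 1 ∧ t * n = max (n - c) 0 := by
    intro n t hn ht
    rw [ht]; split_ifs with h
    · simp [max_eq_right (sub_nonpos.2 h)]
    · push_neg at h
      have hnpos : 0 < n := lt_of_le_of_lt hc h
      have h1 : c / n ≤ 1 := by rw [div_le_one hnpos]; exact h.le
      have h2 : 0 ≤ c / n := div_nonneg hc hn
      refine ⟨by linarith, by linarith, ?_⟩
      rw [max_eq_left (by linarith)]
      field_simp
  obtain ⟨hta0, hta1, htana⟩ := hbnd na ta hna0 hta
  obtain ⟨htb0, htb1, htbnb⟩ := hbnd nb tb hnb0 htb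
  have lip : (ta * na - tb * nb) ^ 2 ≤ (na - nb) ^ 2 := by
    have habs : |ta * na - tb * nb| ≤ |na - nb| := by
      rw [htana, htbnb]
      simpa using abs_max_sub_max_le_abs (na - c) (nb - c) 0
    calc (ta * na - tb * nb) ^ 2 = |ta * na - tb * nb| ^ 2 := (sq_abs _).symm
      _ ≤ |na - nb| ^ 2 := pow_le_pow_left₀ (abs_nonneg _) habs 2
      _ = (na - nb) ^ 2 := sq_abs _
  set s := ∑ j, a j * b j with hs
  have hcs : s ^ 2 ≤ Sa * Sb := Finset.sum_mul_sq_le_sq_mul_sq Finset.univ a b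
  have hs_le : s ≤ na * nb := by
    nlinarith [sq_nonneg (s - na * nb), sq_nonneg (s + na * nb), mul_nonneg hna0 hnb0]
  have expandL : ∑ j, (ta * a j - tb * b j) ^ 2
      = ta ^ 2 * Sa + tb ^ 2 * Sb - 2 * ta * tb * s := by
    have h1 : ∀ j ∈ Finset.univ, (ta * a j - tb * b j) ^ 2 =
        ta ^ 2 * a j ^ 2 + tb ^ 2 * b j ^ 2 - 2 * ta * tb * (a j * b j) :=
      fun j _ => by ring
    rw [Finset.sum_congr rfl h1]
    simp [Finset.sum_add_distrib, Finset.sum_sub_distrib, ← Finset.mul_sum, hSa, hSb, hs]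
  have expandR : ∑ j, (a j - b j) ^ 2 = Sa + Sb - 2 * s := by
    have h1 : ∀ j ∈ Finset.univ, (a j - b j) ^ 2 =
        a j ^ 2 + b j ^ 2 - 2 * (a j * b j) := fun j _ => by ring
    rw [Finset.sum_congr rfl h1]
    simp [Finset.sum_add_distrib, Finset.sum_sub_distrib, ← Finset.mul_sum, hSa, hSb, hs]
  rw [expandL, expandR]
  have htt : ta * tb ≤ 1 := mul_le_one₀ hta1 htb0 htb1
  have key : (na * nb - s) * (1 - ta * tb) ≥ 0 :=
    mul_nonneg (by linarith) (by linarith)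
  have e1 : ta ^ 2 * Sa = (ta * na) ^ 2 := by rw [← hna2]; ring
  have e2 : tb ^ 2 * Sb = (tb * nb) ^ 2 := by rw [← hnb2]; ring
  nlinarith [key, lip, e1, e2, hna2, hnb2]

/-- Theorem 1 (contraction part): the EM iteration map
`F(β) = S_{λτ²}((I − τ²A)β + τ²B)` is a `ξ`-contraction when every eigenvalue
of `I − τ²A` has absolute value at most `ξ < 1`. -/
theorem slants_EM_contraction {N v : ℕ}
    (A : Matrix (Fin N × Fin v) (Fin N × Fin v) ℝ)
    (hAsymm : A.IsSymm) (hApsd : A.PosSemidef)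
    (τ lam ξ : ℝ) (hτ : 0 < τ) (hlam : 0 < lam) (hξ0 : 0 ≤ ξ) (hξ1 : ξ < 1)
    (B : Fin N × Fin v → ℝ)
    (heig : ∀ (μ : ℝ) (x : Fin N × Fin v → ℝ), x ≠ 0 →
      ((1 : Matrix (Fin N × Fin v) (Fin N × Fin v) ℝ) - τ ^ 2 • A).mulVec x = μ • x →
      |μ| ≤ ξ)
    (F : (Fin N × Fin v → ℝ) → (Fin N × Fin v → ℝ))
    (hF : ∀ β, F β = softThresh (lam * τ ^ 2)
      (((1 : Matrix (Fin N × Fin v) (Fin N × Fin v) ℝ) - τ ^ 2 • A).mulVec β + τ ^ 2 • B)) :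
    ∀ β₁ β₂ : Fin N × Fin v → ℝ,
      Real.sqrt (∑ p, (F β₁ p - F β₂ p) ^ 2) ≤ ξ * Real.sqrt (∑ p, (β₁ p - β₂ p) ^ 2) := by
  intro β₁ β₂
  set M := ((1 : Matrix (Fin N × Fin v) (Fin N × Fin v) ℝ) - τ ^ 2 • A) with hMdef
  have hM : M.IsHermitian := by
    rw [Matrix.IsHermitian, hMdef]
    simp [Matrix.conjTranspose_sub, Matrix.conjTranspose_smul, hApsd.1.eq, hAsymm.eq]
  have heigs : ∀ i, |hM.eigenvalues i| ≤ ξ := by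
    intro i
    set b := hM.eigenvectorBasis with hb
    apply heig (hM.eigenvalues i) (⇑(b i))
    · intro h0
      apply hM.eigenvectorBasis.orthonormal.ne_zero i
      exact (WithLp.ofLp_eq_zero 2).1 h0
    · exact hM.mulVec_eigenvectorBasis i
  set c := lam * τ ^ 2 with hc
  have hc0 : 0 ≤ c := le_of_lt (mul_pos hlam (pow_pos hτ 2))
  set x := M.mulVec β₁ + τ ^ 2 • B with hx
  set y := M.mulVec β₂ + τ ^ 2 • B with hy
  have step1 : ∑ p, (F β₁ p - F β₂ p) ^ 2 ≤ ∑ p, (M.mulVec (β₁ - β₂) p) ^ 2 := by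
    have hxy : ∀ p, x p - y p = M.mulVec (β₁ - β₂) p := by
      intro p
      simp [hx, hy, Matrix.mulVec_sub, Pi.sub_apply]
    calc ∑ p, (F β₁ p - F β₂ p) ^ 2
        ≤ ∑ p, (x p - y p) ^ 2 := by
          rw [hF β₁, hF β₂, Fintype.sum_prod_type, Fintype.sum_prod_type]
          apply Finset.sum_le_sum
          intro d _
          have := shrink_nonexpansive c hc0 (fun j => x (d, j)) (fun j => y (d, j))
          simpa [softThresh, blockNorm, hx, hy] using this
      _ = ∑ p, (M.mulVec (β₁ - β₂) p) ^ 2 := by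
          exact Finset.sum_congr rfl fun p _ => by rw [hxy p]
  calc Real.sqrt (∑ p, (F β₁ p - F β₂ p) ^ 2)
      ≤ Real.sqrt (∑ p, (M.mulVec (β₁ - β₂) p) ^ 2) := Real.sqrt_le_sqrt step1
    _ ≤ ξ * Real.sqrt (∑ p, ((β₁ - β₂) p) ^ 2) := herm_mulVec_bound M hM ξ hξ0 heigs _
    _ = ξ * Real.sqrt (∑ p, (β₁ p - β₂ p) ^ 2) := by simp [Pi.sub_apply]
end

section
/- Let m = N·v and let vectors in ℝ^m be partitioned into N blocks of size v. Let A be a symmetric positive semidefinite m×m real matrix, let τ > 0 and λ > 0, let B ∈ ℝ^m, and suppose every eigenvalue of I − τ²A has absolute value at most ξ, where 0 ≤ ξ < 1. Define F(β) = S_{λτ²}((I − τ²A)β + τ²B), where S_{λτ²} is blockwise group soft-thresholding with threshold λτ². Then F has a unique fixed point β̂ ∈ ℝ^m, and for every initial point β⁽⁰⁾ the iterates β⁽ᵏ⁾ = F(β⁽ᵏ⁻¹⁾) satisfy ‖β⁽ᵏ⁾ − β̂‖₂ ≤ (ξᵏ/(1 − ξ))·‖β⁽¹⁾ − β⁽⁰⁾‖₂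 for all k ≥ 0; in particular the error decays exponentially in k. -/
open scoped BigOperators
open scoped RealInnerProductSpace
open Matrix

noncomputable def stBlock {v : ℕ} (c : ℝ) (x : EuclideanSpace ℝ (Fin v)) :
    EuclideanSpace ℝ (Fin v) :=
  (if ‖x‖ ≤ c then 0 else 1 - c / ‖x‖) • x

lemma stBlock_cross {v : ℕ} {c : ℝ} (hc : 0 < c)
    (x y : EuclideanSpace ℝ (Fin v)) (hx : ‖x‖ ≤ c) (hy : c < ‖y‖) :
    ‖stBlock c x - stBlock c y‖ ≤ ‖x - y‖ := by
  have hy0 : 0 < ‖y‖ := lt_trans hc hy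
  unfold stBlock
  rw [if_pos hx, if_neg (not_le.2 hy), zero_smul, zero_sub, norm_neg, norm_smul]
  have h1 : 0 ≤ 1 - c / ‖y‖ := by
    have : c / ‖y‖ ≤ 1 := (div_le_one hy0).2 hy.le
    linarith
  rw [Real.norm_eq_abs, abs_of_nonneg h1, sub_mul, one_mul, div_mul_cancel₀ _ hy0.ne']
  calc ‖y‖ - c ≤ ‖y‖ - ‖x‖ := by linarith
  _ ≤ ‖y - x‖ := by linarith [abs_norm_sub_norm_le y x, le_abs_self (‖y‖ - ‖x‖)]
  _ = ‖x - y‖ := norm_sub_rev y x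

lemma stBlock_nonexpansive {v : ℕ} {c : ℝ} (hc : 0 < c)
    (x y : EuclideanSpace ℝ (Fin v)) :
    ‖stBlock c x - stBlock c y‖ ≤ ‖x - y‖ := by
  rcases le_or_gt ‖x‖ c with hx | hx <;> rcases le_or_gt ‖y‖ c with hy | hy
  · simp [stBlock, hx, hy]
  · exact stBlock_cross hc x y hx hy
  · rw [norm_sub_rev, norm_sub_rev x y]; exact stBlock_cross hc y x hy hx
  · have hx0 : 0 < ‖x‖ := lt_trans hc hx
    have hy0 : 0 < ‖y‖ := lt_trans hc hy
    unfold stBlock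
    rw [if_neg (not_le.2 hx), if_neg (not_le.2 hy)]
    set a := ‖x‖ with ha
    set b := ‖y‖ with hb
    have key : ‖(1 - c / a) • x - (1 - c / b) • y‖ ^ 2 ≤ ‖x - y‖ ^ 2 := by
      have e1 : ‖(1 - c / a) • x - (1 - c / b) • y‖ ^ 2
          = (1 - c / a) ^ 2 * a ^ 2 - 2 * ((1 - c / a) * (1 - c / b)) * ⟪x, y⟫
            + (1 - c / b) ^ 2 * b ^ 2 := by
        rw [norm_sub_sq_real, real_inner_smul_left, real_inner_smul_right,
          norm_smul, norm_smul, Real.norm_eq_abs, Real.norm_eq_abs]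
        rw [mul_pow, mul_pow, sq_abs, sq_abs]
        ring
      have e2 : ‖x - y‖ ^ 2 = a ^ 2 - 2 * ⟪x, y⟫ + b ^ 2 := by
        rw [norm_sub_sq_real]
      rw [e1, e2]
      set t := ⟪x, y⟫ with htdef
      have ht : t ≤ a * b := real_inner_le_norm x y
      have hid : a*b*((a ^ 2 - 2 * t + b ^ 2)
          - ((1 - c / a) ^ 2 * a ^ 2 - 2 * ((1 - c / a) * (1 - c / b)) * t
            + (1 - c / b) ^ 2 * b ^ 2))
          = 2*c*(a+b-c)*(a*b - t) := by
        field_simp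
        ring
      have hfac : 0 ≤ 2*c*(a+b-c)*(a*b - t) :=
        mul_nonneg (mul_nonneg (by linarith) (by linarith)) (by linarith)
      nlinarith [mul_pos hx0 hy0, hid, hfac]
    have := Real.sqrt_le_sqrt key
    rwa [Real.sqrt_sq (norm_nonneg _), Real.sqrt_sq (norm_nonneg _)] at this

noncomputable def blk {N v : ℕ} (r : Fin N × Fin v → ℝ) (d : Fin N) :
    EuclideanSpace ℝ (Fin v) := WithLp.toLp 2 (fun j => r (d, j))

lemma blockNorm_eq {N v : ℕ} (r : Fin N × Fin v → ℝ) (d : Fin N) :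
    blockNorm r d = ‖blk r d‖ := by
  rw [EuclideanSpace.norm_eq, blockNorm]
  congr 1
  refine Finset.sum_congr rfl fun j _ => ?_
  rw [Real.norm_eq_abs, sq_abs]; rfl

lemma softThresh_eq_blk {N v : ℕ} (c : ℝ) (r : Fin N × Fin v → ℝ) (d : Fin N) (j : Fin v) :
    softThresh c r (d, j) = stBlock c (blk r d) j := by
  rw [softThresh, stBlock, blockNorm_eq]
  rfl

lemma euclid_norm_sq' {ι : Type*} [Fintype ι] (x : EuclideanSpace ℝ ι) :
    ‖x‖ ^ 2 = ∑ j, x j ^ 2 := by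
  rw [EuclideanSpace.norm_eq, Real.sq_sqrt (by positivity)]
  exact Finset.sum_congr rfl fun j _ => by rw [Real.norm_eq_abs, sq_abs]

lemma softThresh_sq_le {N v : ℕ} {c : ℝ} (hc : 0 < c) (r s : Fin N × Fin v → ℝ) :
    ∑ p, (softThresh c r p - softThresh c s p) ^ 2 ≤ ∑ p, (r p - s p) ^ 2 := by
  rw [Fintype.sum_prod_type, Fintype.sum_prod_type]
  refine Finset.sum_le_sum fun d _ => ?_
  have h1 : ∑ j, (softThresh c r (d, j) - softThresh c s (d, j)) ^ 2
      = ‖stBlock c (blk r d) - stBlock c (blk s d)‖ ^ 2 := by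
    rw [euclid_norm_sq']
    refine Finset.sum_congr rfl fun j _ => ?_
    rw [softThresh_eq_blk, softThresh_eq_blk]
    congr 1
  have h2 : ∑ j, (r (d, j) - s (d, j)) ^ 2 = ‖blk r d - blk s d‖ ^ 2 := by
    rw [euclid_norm_sq']; rfl
  rw [h1, h2]
  have := stBlock_nonexpansive hc (blk r d) (blk s d)
  nlinarith [norm_nonneg (stBlock c (blk r d) - stBlock c (blk s d)),
    norm_nonneg (blk r d - blk s d)]

lemma mulVec_norm_le {n : Type*} [Fintype n] [DecidableEq n]
    {M : Matrix n n ℝ} (hM : M.IsHermitian) {ξ : ℝ} (hξ : 0 ≤ ξ)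
    (h : ∀ i, |hM.eigenvalues i| ≤ ξ) (z : n → ℝ) :
    Real.sqrt (∑ p, (M.mulVec z p) ^ 2) ≤ ξ * Real.sqrt (∑ p, z p ^ 2) := by
  set x : EuclideanSpace ℝ n := (WithLp.equiv 2 (n → ℝ)).symm z with hx
  have hgoal : Real.sqrt (∑ p, (M.mulVec z p) ^ 2)
      = ‖((WithLp.equiv 2 (n → ℝ)).symm (M.mulVec z) : EuclideanSpace ℝ n)‖ := by
    rw [EuclideanSpace.norm_eq]
    exact congrArg Real.sqrt (Finset.sum_congr rfl fun p _ => by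
      rw [Real.norm_eq_abs, sq_abs]; rfl)
  have hxnorm : Real.sqrt (∑ p, z p ^ 2) = ‖x‖ := by
    rw [EuclideanSpace.norm_eq]
    exact congrArg Real.sqrt (Finset.sum_congr rfl fun p _ => by
      rw [Real.norm_eq_abs, sq_abs]; rfl)
  rw [hgoal, hxnorm]
  set B := hM.eigenvectorBasis with hB
  have hMT : Mᵀ = M := by
    rw [← Matrix.conjTranspose_eq_transpose_of_trivial]; exact hM
  set y : EuclideanSpace ℝ n := (WithLp.equiv 2 (n → ℝ)).symm (M.mulVec z) with hy
  have key : ∀ i, B.repr y i = hM.eigenvalues i * B.repr x i := by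
    intro i
    rw [B.repr_apply_apply, B.repr_apply_apply]
    have h1 : ⟪B i, y⟫ = (B i : n → ℝ) ⬝ᵥ (M *ᵥ z) := by
      rw [EuclideanSpace.inner_eq_star_dotProduct, dotProduct_comm, star_trivial]; rfl
    have h2 : (B i : n → ℝ) ⬝ᵥ (M *ᵥ z) = (M *ᵥ (B i : n → ℝ)) ⬝ᵥ z := by
      rw [Matrix.dotProduct_mulVec, ← Matrix.vecMul_transpose, hMT]
    have h3 : (M *ᵥ (B i : n → ℝ)) = hM.eigenvalues i • (B i : n → ℝ) :=
      hM.mulVec_eigenvectorBasis i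
    rw [h1, h2, h3, smul_dotProduct]
    rw [EuclideanSpace.inner_eq_star_dotProduct, dotProduct_comm, star_trivial, smul_eq_mul]; rfl
  have hn1 : ‖y‖ ^ 2 ≤ ξ ^ 2 * ‖x‖ ^ 2 := by
    calc ‖y‖ ^ 2 = ‖B.repr y‖ ^ 2 := by rw [B.repr.norm_map]
    _ = ∑ i, (B.repr y i) ^ 2 := euclid_norm_sq' _
    _ = ∑ i, (hM.eigenvalues i * B.repr x i) ^ 2 :=
        Finset.sum_congr rfl fun i _ => by rw [key i]
    _ ≤ ∑ i, ξ ^ 2 * (B.repr x i) ^ 2 := by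
        refine Finset.sum_le_sum fun i _ => ?_
        rw [mul_pow]
        have h2 : hM.eigenvalues i ^ 2 ≤ ξ ^ 2 :=
          sq_le_sq' (by linarith [neg_abs_le (hM.eigenvalues i), h i])
            (le_trans (le_abs_self _) (h i))
        exact mul_le_mul_of_nonneg_right h2 (sq_nonneg _)
    _ = ξ ^ 2 * ‖B.repr x‖ ^ 2 := by rw [euclid_norm_sq', ← Finset.mul_sum]
    _ = ξ ^ 2 * ‖x‖ ^ 2 := by rw [B.repr.norm_map]
  have := Real.sqrt_le_sqrt hn1
  rw [Real.sqrt_sq (norm_nonneg _), ← mul_pow, Real.sqrt_sq (by positivity)] at this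
  exact this

/-- Theorem 1 (exponential convergence): the EM iteration map
`F(β) = S_{λτ²}((I − τ²A)β + τ²B)` has a unique fixed point `β̂`, and the iterates
`β⁽ᵏ⁾ = F^[k](β⁽⁰⁾)` satisfy `‖β⁽ᵏ⁾ − β̂‖₂ ≤ ξᵏ/(1−ξ)·‖β⁽¹⁾ − β⁽⁰⁾‖₂`. -/
theorem slants_EM_exponential_convergence {N v : ℕ}
    (A : Matrix (Fin N × Fin v) (Fin N × Fin v) ℝ)
    (hAsymm : A.IsSymm) (hApsd : A.PosSemidef)
    (τ lam ξ : ℝ) (hτ : 0 < τ) (hlam : 0 < lam) (hξ0 : 0 ≤ ξ) (hξ1 : ξ < 1)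
    (B : Fin N × Fin v → ℝ)
    (heig : ∀ (μ : ℝ) (x : Fin N × Fin v → ℝ), x ≠ 0 →
      ((1 : Matrix (Fin N × Fin v) (Fin N × Fin v) ℝ) - τ ^ 2 • A).mulVec x = μ • x →
      |μ| ≤ ξ)
    (F : (Fin N × Fin v → ℝ) → (Fin N × Fin v → ℝ))
    (hF : ∀ β, F β = softThresh (lam * τ ^ 2)
      (((1 : Matrix (Fin N × Fin v) (Fin N × Fin v) ℝ) - τ ^ 2 • A).mulVec β + τ ^ 2 • B)) :
    ∃ βhat : Fin N × Fin v → ℝ,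
      F βhat = βhat ∧
      (∀ β' : Fin N × Fin v → ℝ, F β' = β' → β' = βhat) ∧
      (∀ (β₀ : Fin N × Fin v → ℝ) (k : ℕ),
        Real.sqrt (∑ p, (F^[k] β₀ p - βhat p) ^ 2)
          ≤ ξ ^ k / (1 - ξ) * Real.sqrt (∑ p, (F β₀ p - β₀ p) ^ 2)) := by
  classical
  set M : Matrix (Fin N × Fin v) (Fin N × Fin v) ℝ :=
    (1 : Matrix (Fin N × Fin v) (Fin N × Fin v) ℝ) - τ ^ 2 • A with hM
  have hMherm : M.IsHermitian := by
    have hA' : A.IsHermitian := hApsd.1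
    show Mᴴ = M
    rw [hM, Matrix.conjTranspose_sub, Matrix.conjTranspose_smul, hA'.eq,
      Matrix.conjTranspose_one]
    norm_num
  -- eigenvalue bound
  have heigbd : ∀ i, |hMherm.eigenvalues i| ≤ ξ := by
    intro i
    refine heig _ ((WithLp.equiv 2 _) (hMherm.eigenvectorBasis i)) ?_ ?_
    · exact fun hzero => hMherm.eigenvectorBasis.orthonormal.ne_zero i
        (by ext j; exact congrFun hzero j)
    · exact hMherm.mulVec_eigenvectorBasis i
  have hc : 0 < lam * τ ^ 2 := by positivity
  set K : NNReal := ⟨ξ, hξ0⟩ with hK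
  have hKcoe : (K : ℝ) = ξ := rfl
  have hK1 : K < 1 := by
    rw [← NNReal.coe_lt_coe, hKcoe, NNReal.coe_one]; exact hξ1
  have hdist : ∀ a b : EuclideanSpace ℝ (Fin N × Fin v),
      dist a b = Real.sqrt (∑ p, (a p - b p) ^ 2) := by
    intro a b
    rw [EuclideanSpace.dist_eq]
    exact congrArg Real.sqrt (Finset.sum_congr rfl fun p _ => by
      rw [Real.dist_eq, sq_abs])
  set G : EuclideanSpace ℝ (Fin N × Fin v) → EuclideanSpace ℝ (Fin N × Fin v) :=
    fun a => WithLp.toLp 2 (F (WithLp.ofLp a)) with hG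
  have hlip : LipschitzWith K G := by
    refine LipschitzWith.of_dist_le_mul fun a b => ?_
    rw [hdist, hdist, hKcoe]
    have hsq1 : ∑ p, (G a p - G b p) ^ 2
        ≤ ∑ p, ((M.mulVec a + τ ^ 2 • B) p - (M.mulVec b + τ ^ 2 • B) p) ^ 2 := by
      show ∑ p, (F a.ofLp p - F b.ofLp p) ^ 2 ≤ _
      rw [hF a, hF b]
      exact softThresh_sq_le hc _ _
    have hsq2 : ∀ p, (M.mulVec a + τ ^ 2 • B) p - (M.mulVec b + τ ^ 2 • B) p
        = M.mulVec (fun q => a q - b q) p := by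
      intro p
      have h0 : (fun q => a q - b q) = (fun q => a q) - (fun q => b q) := rfl
      rw [h0, Matrix.mulVec_sub]
      simp [Matrix.mulVec, Pi.smul_apply]
    calc Real.sqrt (∑ p, (G a p - G b p) ^ 2)
        ≤ Real.sqrt (∑ p, (M.mulVec (fun q => a q - b q) p) ^ 2) := by
          apply Real.sqrt_le_sqrt
          calc ∑ p, (G a p - G b p) ^ 2 ≤ _ := hsq1
          _ = ∑ p, (M.mulVec (fun q => a q - b q) p) ^ 2 :=
            Finset.sum_congr rfl fun p _ => by rw [hsq2 p]
    _ ≤ ξ * Real.sqrt (∑ p, (a p - b p) ^ 2) :=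
        mulVec_norm_le hMherm hξ0 heigbd _
  have hcontr : ContractingWith K G := ⟨hK1, hlip⟩
  set βhat : EuclideanSpace ℝ (Fin N × Fin v) :=
    ContractingWith.fixedPoint G hcontr with hbh
  have hfixG : G βhat = βhat := hcontr.fixedPoint_isFixedPt
  have hfix : F βhat = βhat := congrArg WithLp.ofLp hfixG
  refine ⟨βhat, hfix, ?_, ?_⟩
  · intro β' hβ'
    exact congrArg WithLp.ofLp (hcontr.fixedPoint_unique (x := WithLp.toLp 2 β')
      (show WithLp.toLp 2 (F β') = WithLp.toLp 2 β' by rw [hβ']))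
  · intro β₀ k
    have hb := hcontr.apriori_dist_iterate_fixedPoint_le
      (WithLp.toLp 2 β₀ : EuclideanSpace ℝ (Fin N × Fin v)) k
    have hit : G^[k] (WithLp.toLp 2 β₀) = WithLp.toLp 2 (F^[k] β₀) :=
      ((Function.Semiconj.iterate_right (f := WithLp.toLp 2) (fun x => rfl) k) β₀).symm
    rw [hit, hdist, hdist, hKcoe] at hb
    have hcomm : Real.sqrt (∑ p, (β₀ p - F β₀ p) ^ 2)
        = Real.sqrt (∑ p, (F β₀ p - β₀ p) ^ 2) :=
      congrArg Real.sqrt (Finset.sum_congr rfl fun p _ => by ring)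
    calc Real.sqrt (∑ p, (F^[k] β₀ p - βhat p) ^ 2)
        ≤ Real.sqrt (∑ p, (β₀ p - F β₀ p) ^ 2) * ξ ^ k / (1 - ξ) := hb
    _ = ξ ^ k / (1 - ξ) * Real.sqrt (∑ p, (F β₀ p - β₀ p) ^ 2) := by
        rw [hcomm]; ring
end

section
/- Let Z be a real T×m matrix whose m columns are partitioned into N blocks of size v, let W be a T×T diagonal matrix with strictly positive diagonal entries, let Y ∈ ℝ^T, and let λ > 0, τ > 0. Set A = ZᵀWZ and B = ZᵀWY, and define the EM iteration map F(β) = S_{λτ²}((I − τ²A)β + τ²B), where S_{λτ²} is blockwise group soft-thresholding with threshold λτ². Then β* ∈ ℝ^m is a fixed point of F if and only if β* is a global minimizer of the penalized weighted least-squares objective G(β) = (1/2)(Y − Zβ)ᵀW(Y − Zβ) + λ·Σ_{d=1}^{N} ‖β_d‖₂, where β_d denotes the d-th block of β. -/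
open scoped BigOperators
open Matrix

lemma blockNorm_nonneg {N v : ℕ} (r : Fin N × Fin v → ℝ) (d : Fin N) :
    0 ≤ blockNorm r d := Real.sqrt_nonneg _

lemma sq_blockNorm {N v : ℕ} (r : Fin N × Fin v → ℝ) (d : Fin N) :
    blockNorm r d ^ 2 = ∑ j, r (d, j) ^ 2 :=
  Real.sq_sqrt (Finset.sum_nonneg fun _ _ => sq_nonneg _)

lemma blockNorm_eq_zero_iff {N v : ℕ} (r : Fin N × Fin v → ℝ) (d : Fin N) :
    blockNorm r d = 0 ↔ ∀ j, r (d, j) = 0 := by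
  rw [blockNorm, Real.sqrt_eq_zero (Finset.sum_nonneg fun _ _ => sq_nonneg _)]
  constructor
  · intro h j
    have := (Finset.sum_eq_zero_iff_of_nonneg (fun i _ => sq_nonneg (r (d, i)))).1 h j
      (Finset.mem_univ j)
    exact pow_eq_zero_iff (by norm_num) |>.1 this
  · intro h; simp [h]

lemma blockNorm_cs {N v : ℕ} (a b : Fin N × Fin v → ℝ) (d : Fin N) :
    ∑ j, a (d, j) * b (d, j) ≤ blockNorm a d * blockNorm b d :=
  Real.sum_mul_le_sqrt_mul_sqrt _ _ _

lemma blockNorm_congr {N v : ℕ} (r s : Fin N × Fin v → ℝ) (d : Fin N)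
    (h : ∀ j, r (d, j) = s (d, j)) : blockNorm r d = blockNorm s d := by
  unfold blockNorm; congr 1; exact Finset.sum_congr rfl fun j _ => by rw [h j]

lemma blockNorm_scale {N v : ℕ} (r s : Fin N × Fin v → ℝ) (d : Fin N) (c : ℝ)
    (hc : 0 ≤ c) (h : ∀ j, r (d, j) = c * s (d, j)) :
    blockNorm r d = c * blockNorm s d := by
  unfold blockNorm
  rw [show ∑ j, r (d, j) ^ 2 = c ^ 2 * ∑ j, s (d, j) ^ 2 by
    rw [Finset.mul_sum]; exact Finset.sum_congr rfl fun j _ => by rw [h j]; ring]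
  rw [Real.sqrt_mul (sq_nonneg c), Real.sqrt_sq hc]

lemma blockNorm_neg {N v : ℕ} (r : Fin N × Fin v → ℝ) (d : Fin N) :
    blockNorm (fun p => -r p) d = blockNorm r d := by
  unfold blockNorm; congr 1; exact Finset.sum_congr rfl fun j _ => by ring

lemma pos_coeff (a b : ℝ) (h : ∀ t : ℝ, 0 < t → 0 ≤ a * t + b * t ^ 2) : 0 ≤ a := by
  by_contra hn
  push_neg at hn
  set t : ℝ := -a / (2 * (|b| + 1)) with ht
  have hb : (0:ℝ) < |b| + 1 := by positivity
  have htpos : 0 < t := div_pos (by linarith) (by positivity)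
  have := h t htpos
  have hbt : b * t ^ 2 ≤ (|b| + 1) * t ^ 2 := by
    apply mul_le_mul_of_nonneg_right _ (sq_nonneg t)
    calc b ≤ |b| := le_abs_self b
    _ ≤ |b| + 1 := by linarith
  have key : a * t + (|b| + 1) * t ^ 2 < 0 := by
    have : (|b| + 1) * t = -a / 2 := by
      rw [ht, mul_div_assoc', div_eq_div_iff (by positivity) (by norm_num)]; ring
    nlinarith
  linarith

set_option maxHeartbeats 1600000 in
/-- Fixed points of the SLANTS EM iteration `F(β) = S_{λτ²}((I − τ²A)β + τ²B)`,
with `A = ZᵀWZ` and `B = ZᵀWY`, are exactly the global minimizers of the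
group-LASSO objective `G(β) = ½(Y−Zβ)ᵀW(Y−Zβ) + λ Σ_d ‖β_d‖₂`. -/
theorem slants_EM_fixed_point_iff_group_lasso_minimizer {T N v : ℕ}
    (Z : Matrix (Fin T) (Fin N × Fin v) ℝ)
    (w : Fin T → ℝ) (hw : ∀ t, 0 < w t)
    (Y : Fin T → ℝ) (lam τ : ℝ) (hlam : 0 < lam) (hτ : 0 < τ)
    (A : Matrix (Fin N × Fin v) (Fin N × Fin v) ℝ)
    (hA : A = Zᵀ * Matrix.diagonal w * Z)
    (B : Fin N × Fin v → ℝ)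
    (hB : B = (Zᵀ * Matrix.diagonal w).mulVec Y)
    (F : (Fin N × Fin v → ℝ) → (Fin N × Fin v → ℝ))
    (hF : ∀ β, F β = softThresh (lam * τ ^ 2)
      (((1 : Matrix (Fin N × Fin v) (Fin N × Fin v) ℝ) - τ ^ 2 • A).mulVec β + τ ^ 2 • B))
    (G : (Fin N × Fin v → ℝ) → ℝ)
    (hG : ∀ β, G β = (1 / 2) * (∑ t, w t * (Y t - Z.mulVec β t) ^ 2)
      + lam * ∑ d, blockNorm β d) :
    ∀ βstar : Fin N × Fin v → ℝ,
      F βstar = βstar ↔ (∀ β : Fin N × Fin v → ℝ, G βstar ≤ G β) := by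
  intro βstar
  set c : ℝ := lam * τ ^ 2 with hcdef
  have hc : 0 < c := by rw [hcdef]; positivity
  have hτ2 : (0:ℝ) < τ ^ 2 := by positivity
  set g : Fin N × Fin v → ℝ := fun p => A.mulVec βstar p - B p with hgdef
  set u : Fin T → ℝ := fun t => Y t - Z.mulVec βstar t with hudef
  have hZt : ∀ (y : Fin T → ℝ) (p : Fin N × Fin v), Zᵀ.mulVec y p = ∑ t, Z t p * y t := by
    intro y p
    simp [Matrix.mulVec, dotProduct, Matrix.transpose_apply]
  -- explicit formula for g
  have hg : ∀ p, g p = -∑ t, Z t p * (w t * u t) := by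
    intro p
    have h1 : A.mulVec βstar p = ∑ t, Z t p * (w t * Z.mulVec βstar t) := by
      rw [hA, ← Matrix.mulVec_mulVec, ← Matrix.mulVec_mulVec, hZt]
      exact Finset.sum_congr rfl fun t _ => by rw [Matrix.mulVec_diagonal]
    have h2 : B p = ∑ t, Z t p * (w t * Y t) := by
      rw [hB, ← Matrix.mulVec_mulVec, hZt]
      exact Finset.sum_congr rfl fun t _ => by rw [Matrix.mulVec_diagonal]
    simp only [hgdef]
    rw [h1, h2, ← Finset.sum_sub_distrib, ← Finset.sum_neg_distrib]
    exact Finset.sum_congr rfl fun t _ => by simp only [hudef]; ring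
  -- the argument of the soft-thresholding
  set r : Fin N × Fin v → ℝ := fun p => βstar p - τ ^ 2 * g p with hrdef
  have hr : ((1 : Matrix (Fin N × Fin v) (Fin N × Fin v) ℝ) - τ ^ 2 • A).mulVec βstar
      + τ ^ 2 • B = r := by
    funext p
    simp only [hrdef, hgdef, Pi.add_apply, Pi.smul_apply, smul_eq_mul,
      Matrix.sub_mulVec, Matrix.one_mulVec, Matrix.smul_mulVec, Pi.sub_apply]
    ring
  have hfix_iff : F βstar = βstar ↔ ∀ p, softThresh c r p = βstar p := by
    rw [hF, hr]
    exact ⟨fun h p => congrFun h p, fun h => funext h⟩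
  -- the quadratic expansion of G around βstar
  have hexp : ∀ β, G β = G βstar + (∑ p, g p * (β p - βstar p))
      + (1 / 2) * (∑ t, w t * (Z.mulVec (β - βstar) t) ^ 2)
      + lam * (∑ d, blockNorm β d - ∑ d, blockNorm βstar d) := by
    intro β
    have hYt : ∀ t, Y t - Z.mulVec β t = u t - Z.mulVec (β - βstar) t := by
      intro t; rw [Matrix.mulVec_sub]; simp only [hudef, Pi.sub_apply]; ring
    have hsδ : ∀ t, Z.mulVec (β - βstar) t = ∑ p, Z t p * (β p - βstar p) := by
      intro t; simp [Matrix.mulVec, dotProduct]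
    have hcross : ∑ p, g p * (β p - βstar p)
        = -∑ t, (w t * u t) * Z.mulVec (β - βstar) t := by
      rw [← Finset.sum_neg_distrib]
      rw [show (∑ p, g p * (β p - βstar p))
          = ∑ p, ∑ t, -((Z t p * (w t * u t)) * (β p - βstar p)) from
        Finset.sum_congr rfl fun p _ => by
          rw [hg p, neg_mul, Finset.sum_mul, ← Finset.sum_neg_distrib]]
      rw [Finset.sum_comm]
      refine Finset.sum_congr rfl fun t _ => ?_
      rw [hsδ t, Finset.mul_sum, ← Finset.sum_neg_distrib]
      exact Finset.sum_congr rfl fun p _ => by ring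
    have key : ∑ t, w t * (Y t - Z.mulVec β t) ^ 2
        = ∑ t, w t * (u t) ^ 2 + 2 * (∑ p, g p * (β p - βstar p))
          + ∑ t, w t * (Z.mulVec (β - βstar) t) ^ 2 := by
      rw [hcross]
      rw [show ∑ t, w t * (Y t - Z.mulVec β t) ^ 2
          = ∑ t, (w t * (u t) ^ 2 - 2 * ((w t * u t) * Z.mulVec (β - βstar) t)
            + w t * (Z.mulVec (β - βstar) t) ^ 2) from
        Finset.sum_congr rfl fun t _ => by rw [hYt t]; ring]
      rw [Finset.sum_add_distrib, Finset.sum_sub_distrib, ← Finset.mul_sum]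
      ring
    rw [hG β, hG βstar, key]
    simp only [hudef]
    ring
  -- KKT conditions, encoded as two statements
  -- K1 : zero blocks have small gradient; K2 : nonzero blocks satisfy stationarity
  have main :
      ((∀ d, blockNorm βstar d = 0 → blockNorm g d ≤ lam) ∧
       (∀ d, blockNorm βstar d ≠ 0 →
          ∀ j, blockNorm βstar d * g (d, j) = -(lam * βstar (d, j)))) →
      ∀ β, G βstar ≤ G β := by
    rintro ⟨hk1, hk2⟩ β
    rw [hexp β]
    have hq : 0 ≤ ∑ t, w t * (Z.mulVec (β - βstar) t) ^ 2 :=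
      Finset.sum_nonneg fun t _ => mul_nonneg (hw t).le (sq_nonneg _)
    have hblocks : 0 ≤ (∑ p, g p * (β p - βstar p))
        + lam * (∑ d, blockNorm β d - ∑ d, blockNorm βstar d) := by
      have hsplit : (∑ p, g p * (β p - βstar p))
          + lam * (∑ d, blockNorm β d - ∑ d, blockNorm βstar d)
          = ∑ d, ((∑ j, g (d, j) * (β (d, j) - βstar (d, j)))
            + lam * (blockNorm β d - blockNorm βstar d)) := by
        rw [Fintype.sum_prod_type, Finset.sum_add_distrib, ← Finset.sum_sub_distrib,
          Finset.mul_sum]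
      rw [hsplit]
      refine Finset.sum_nonneg fun d _ => ?_
      by_cases hn : blockNorm βstar d = 0
      · have hz : ∀ j, βstar (d, j) = 0 := (blockNorm_eq_zero_iff βstar d).1 hn
        have hcs := blockNorm_cs (fun p => -g p) β d
        rw [blockNorm_neg] at hcs
        have hgd : blockNorm g d ≤ lam := hk1 d hn
        have hbn : 0 ≤ blockNorm β d := blockNorm_nonneg _ _
        have h5 : ∑ j, g (d, j) * (β (d, j) - βstar (d, j)) = -∑ j, -g (d, j) * β (d, j) := by
          rw [← Finset.sum_neg_distrib]
          exact Finset.sum_congr rfl fun j _ => by rw [hz j]; ring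
        rw [hn, h5]
        nlinarith [blockNorm_nonneg g d]
      · have hnpos : 0 < blockNorm βstar d :=
          lt_of_le_of_ne (blockNorm_nonneg _ _) (Ne.symm hn)
        have hcs : ∑ j, βstar (d, j) * β (d, j) ≤ blockNorm βstar d * blockNorm β d :=
          blockNorm_cs _ _ _
        have hn2 : blockNorm βstar d ^ 2 = ∑ j, βstar (d, j) ^ 2 := sq_blockNorm βstar d
        have hnX : blockNorm βstar d * (∑ j, g (d, j) * (β (d, j) - βstar (d, j)))
            = -(lam * ((∑ j, βstar (d, j) * β (d, j)) - blockNorm βstar d ^ 2)) := by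
          rw [Finset.mul_sum]
          rw [show ∑ j, blockNorm βstar d * (g (d, j) * (β (d, j) - βstar (d, j)))
              = ∑ j, -(lam * (βstar (d, j) * β (d, j) - βstar (d, j) ^ 2)) from
            Finset.sum_congr rfl fun j _ => by
              linear_combination (β (d, j) - βstar (d, j)) * hk2 d hn j]
          rw [hn2, ← Finset.sum_sub_distrib, Finset.mul_sum, ← Finset.sum_neg_distrib]
        nlinarith [blockNorm_nonneg β d, mul_le_mul_of_nonneg_left hcs hlam.le]
    linarith
  -- global minimality implies the KKT conditions
  have conv :
      (∀ β, G βstar ≤ G β) →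
      ((∀ d, blockNorm βstar d = 0 → blockNorm g d ≤ lam) ∧
       (∀ d, blockNorm βstar d ≠ 0 →
          ∀ j, blockNorm βstar d * g (d, j) = -(lam * βstar (d, j)))) := by
    intro hmin
    have hper : ∀ (d : Fin N) (e : Fin v → ℝ), ∃ Q : ℝ, 0 ≤ Q ∧ ∀ t : ℝ,
        G (fun p => βstar p + (if p.1 = d then t * e p.2 else 0)) - G βstar
          = t * (∑ j, g (d, j) * e j) + t ^ 2 * Q
            + lam * (blockNorm (fun p => βstar p + (if p.1 = d then t * e p.2 else 0)) d
              - blockNorm βstar d) := by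
      intro d e
      set e' : Fin N × Fin v → ℝ := fun p => if p.1 = d then e p.2 else 0 with he'def
      refine ⟨(1 / 2) * ∑ t', w t' * (Z.mulVec e' t') ^ 2,
        mul_nonneg (by norm_num)
          (Finset.sum_nonneg fun t' _ => mul_nonneg (hw t').le (sq_nonneg _)), fun t => ?_⟩
      set βt : Fin N × Fin v → ℝ := fun p => βstar p + (if p.1 = d then t * e p.2 else 0)
        with hβtdef
      have hδ : βt - βstar = t • e' := by
        funext p
        simp only [hβtdef, he'def, Pi.sub_apply, Pi.smul_apply, smul_eq_mul]
        by_cases h : p.1 = d <;> simp [h]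
      have h1 : ∑ p, g p * (βt p - βstar p) = t * ∑ j, g (d, j) * e j := by
        rw [show ∑ p, g p * (βt p - βstar p) = ∑ p, g p * (t * e' p) from
          Finset.sum_congr rfl fun p _ => by rw [← Pi.sub_apply βt βstar p, hδ]; rfl]
        rw [Fintype.sum_prod_type, Finset.mul_sum]
        rw [Finset.sum_eq_single d]
        · refine Finset.sum_congr rfl fun j _ => ?_
          simp only [he'def, if_pos rfl]
          ring
        · intro d' _ hd'
          refine Finset.sum_eq_zero fun j _ => by simp [he'def, hd']
        · intro h; exact absurd (Finset.mem_univ d) h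
      have h2 : ∑ t', w t' * (Z.mulVec (βt - βstar) t') ^ 2
          = t ^ 2 * ∑ t', w t' * (Z.mulVec e' t') ^ 2 := by
        rw [hδ, Finset.mul_sum]
        refine Finset.sum_congr rfl fun t' _ => ?_
        rw [Matrix.mulVec_smul]
        simp only [Pi.smul_apply, smul_eq_mul]
        ring
      have h3' : ∑ d', blockNorm βt d' - ∑ d', blockNorm βstar d'
          = blockNorm βt d - blockNorm βstar d := by
        rw [← Finset.sum_sub_distrib]
        rw [Finset.sum_eq_single d]
        · intro d' _ hd'
          rw [blockNorm_congr βt βstar d' fun j => by simp [hβtdef, hd']]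
          ring
        · intro h; exact absurd (Finset.mem_univ d) h
      rw [hexp βt, h1, h2, h3']
      ring
    constructor
    · -- K1
      intro d hn
      have hz : ∀ j, βstar (d, j) = 0 := (blockNorm_eq_zero_iff βstar d).1 hn
      have hdir0 : ∀ e : Fin v → ℝ,
          0 ≤ (∑ j, g (d, j) * e j) + lam * Real.sqrt (∑ j, (e j) ^ 2) := by
        intro e
        obtain ⟨Q, hQ, hQe⟩ := hper d e
        refine pos_coeff _ Q fun t ht => ?_
        have heq := hQe t
        have hbnt : blockNorm (fun p => βstar p + (if p.1 = d then t * e p.2 else 0)) d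
            = t * Real.sqrt (∑ j, (e j) ^ 2) := by
          have hrfl : t * Real.sqrt (∑ j, (e j) ^ 2)
              = t * blockNorm (fun p : Fin N × Fin v => e p.2) d := rfl
          rw [hrfl]
          exact blockNorm_scale _ _ d t ht.le fun j => by simp [hz j]
        have hmin' := hmin (fun p => βstar p + (if p.1 = d then t * e p.2 else 0))
        rw [hbnt, hn] at heq
        nlinarith [heq, hmin']
      have hkey := hdir0 (fun j => -g (d, j))
      have hsum : ∑ j, g (d, j) * (fun j => -g (d, j)) j = -(blockNorm g d) ^ 2 := by
        rw [sq_blockNorm, ← Finset.sum_neg_distrib]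
        exact Finset.sum_congr rfl fun j _ => by ring
      have hs2 : Real.sqrt (∑ j, ((fun j => -g (d, j)) j) ^ 2) = blockNorm g d := by
        rw [show (∑ j, ((fun j => -g (d, j)) j) ^ 2) = ∑ j, (g (d, j)) ^ 2 from
          Finset.sum_congr rfl fun j _ => by ring]
        rfl
      rw [hsum, hs2] at hkey
      have hbg : 0 ≤ blockNorm g d := blockNorm_nonneg _ _
      rcases eq_or_lt_of_le hbg with h | h
      · rw [← h]; exact hlam.le
      · nlinarith
    · -- K2
      intro d hn j
      have hnpos : 0 < blockNorm βstar d :=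
        lt_of_le_of_ne (blockNorm_nonneg _ _) (Ne.symm hn)
      have hdir : ∀ e : Fin v → ℝ,
          0 ≤ (∑ j', g (d, j') * e j')
            + lam * (∑ j', βstar (d, j') * e j') / blockNorm βstar d := by
        intro e
        obtain ⟨Q, hQ, hQe⟩ := hper d e
        have hqnn : (0:ℝ) ≤ ∑ j', (e j') ^ 2 := Finset.sum_nonneg fun _ _ => sq_nonneg _
        refine pos_coeff _ (Q + lam * (∑ j', (e j') ^ 2) / (2 * blockNorm βstar d))
          fun t ht => ?_
        have heq := hQe t
        have hx : ∑ j', ((fun p => βstar p + (if p.1 = d then t * e p.2 else 0)) (d, j')) ^ 2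
            = blockNorm βstar d ^ 2 + 2 * t * (∑ j', βstar (d, j') * e j')
              + t ^ 2 * (∑ j', (e j') ^ 2) := by
          rw [sq_blockNorm βstar d]
          rw [Finset.mul_sum, Finset.mul_sum, ← Finset.sum_add_distrib,
            ← Finset.sum_add_distrib]
          have hite : ∀ (j' : Fin v) (x : ℝ),
              (if ((d, j') : Fin N × Fin v).1 = d then x else 0) = x := fun j' x => if_pos rfl
          refine Finset.sum_congr rfl fun j' _ => ?_
          simp only [hite, if_true, ite_true]
          ring
        have hxnn : (0:ℝ) ≤ blockNorm βstar d ^ 2 + 2 * t * (∑ j', βstar (d, j') * e j')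
            + t ^ 2 * (∑ j', (e j') ^ 2) := by
          rw [← hx]; exact Finset.sum_nonneg fun _ _ => sq_nonneg _
        have hbn : blockNorm (fun p => βstar p + (if p.1 = d then t * e p.2 else 0)) d
            - blockNorm βstar d
            ≤ t * ((∑ j', βstar (d, j') * e j') / blockNorm βstar d)
              + t ^ 2 * ((∑ j', (e j') ^ 2) / (2 * blockNorm βstar d)) := by
          have hsq : blockNorm (fun p => βstar p + (if p.1 = d then t * e p.2 else 0)) d
              ≤ (blockNorm βstar d ^ 2 + 2 * t * (∑ j', βstar (d, j') * e j')
                + t ^ 2 * (∑ j', (e j') ^ 2) + blockNorm βstar d ^ 2)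
                / (2 * blockNorm βstar d) := by
            rw [blockNorm, hx]
            have h1 := Real.sq_sqrt hxnn
            have h2 := Real.sqrt_nonneg (blockNorm βstar d ^ 2
              + 2 * t * (∑ j', βstar (d, j') * e j') + t ^ 2 * (∑ j', (e j') ^ 2))
            rw [le_div_iff₀ (by positivity : (0:ℝ) < 2 * blockNorm βstar d)]
            nlinarith [sq_nonneg (Real.sqrt (blockNorm βstar d ^ 2
              + 2 * t * (∑ j', βstar (d, j') * e j') + t ^ 2 * (∑ j', (e j') ^ 2))
              - blockNorm βstar d)]
          have heq2 : (blockNorm βstar d ^ 2 + 2 * t * (∑ j', βstar (d, j') * e j')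
              + t ^ 2 * (∑ j', (e j') ^ 2) + blockNorm βstar d ^ 2)
                / (2 * blockNorm βstar d) - blockNorm βstar d
              = t * ((∑ j', βstar (d, j') * e j') / blockNorm βstar d)
                + t ^ 2 * ((∑ j', (e j') ^ 2) / (2 * blockNorm βstar d)) := by
            field_simp
            ring
          linarith
        have hmin' := hmin (fun p => βstar p + (if p.1 = d then t * e p.2 else 0))
        have hlb : 0 ≤ t * (∑ j', g (d, j') * e j') + t ^ 2 * Q
            + lam * (blockNorm (fun p => βstar p + (if p.1 = d then t * e p.2 else 0)) d
              - blockNorm βstar d) := by rw [← heq]; linarith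
        have hlam' : lam * (blockNorm (fun p => βstar p + (if p.1 = d then t * e p.2 else 0)) d
              - blockNorm βstar d)
            ≤ lam * (t * ((∑ j', βstar (d, j') * e j') / blockNorm βstar d)
              + t ^ 2 * ((∑ j', (e j') ^ 2) / (2 * blockNorm βstar d))) :=
          mul_le_mul_of_nonneg_left hbn hlam.le
        have hfin : 0 ≤ t * (∑ j', g (d, j') * e j') + t ^ 2 * Q
            + lam * (t * ((∑ j', βstar (d, j') * e j') / blockNorm βstar d)
              + t ^ 2 * ((∑ j', (e j') ^ 2) / (2 * blockNorm βstar d))) := by linarith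
        calc (0:ℝ) ≤ _ := hfin
        _ = ((∑ j', g (d, j') * e j')
              + lam * (∑ j', βstar (d, j') * e j') / blockNorm βstar d) * t
            + (Q + lam * (∑ j', (e j') ^ 2) / (2 * blockNorm βstar d)) * t ^ 2 := by
          field_simp
          ring
      have hA1 := hdir (fun j' => if j' = j then 1 else 0)
      have hA2 := hdir (fun j' => if j' = j then -1 else 0)
      have hs1 : ∑ j', g (d, j') * (fun j' => if j' = j then (1:ℝ) else 0) j' = g (d, j) := by
        rw [Finset.sum_eq_single j]
        · simp
        · intro b _ hb; simp [hb]
        · intro h; exact absurd (Finset.mem_univ j) h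
      have hs2 : ∑ j', βstar (d, j') * (fun j' => if j' = j then (1:ℝ) else 0) j'
          = βstar (d, j) := by
        rw [Finset.sum_eq_single j]
        · simp
        · intro b _ hb; simp [hb]
        · intro h; exact absurd (Finset.mem_univ j) h
      have hs3 : ∑ j', g (d, j') * (fun j' => if j' = j then (-1:ℝ) else 0) j'
          = -g (d, j) := by
        rw [Finset.sum_eq_single j]
        · simp
        · intro b _ hb; simp [hb]
        · intro h; exact absurd (Finset.mem_univ j) h
      have hs4 : ∑ j', βstar (d, j') * (fun j' => if j' = j then (-1:ℝ) else 0) j'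
          = -βstar (d, j) := by
        rw [Finset.sum_eq_single j]
        · simp
        · intro b _ hb; simp [hb]
        · intro h; exact absurd (Finset.mem_univ j) h
      rw [hs1, hs2] at hA1
      rw [hs3, hs4] at hA2
      have hzero : g (d, j) + lam * βstar (d, j) / blockNorm βstar d = 0 := by
        have := hA2
        rw [mul_neg, neg_div] at this
        linarith
      have hne : blockNorm βstar d ≠ 0 := hn
      field_simp at hzero
      linarith
  -- fixed point iff KKT
  have fixKKT : (∀ p, softThresh c r p = βstar p) ↔
      ((∀ d, blockNorm βstar d = 0 → blockNorm g d ≤ lam) ∧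
       (∀ d, blockNorm βstar d ≠ 0 →
          ∀ j, blockNorm βstar d * g (d, j) = -(lam * βstar (d, j)))) := by
    constructor
    · intro hfp
      have hchar : ∀ d, (blockNorm r d ≤ c ∧ ∀ j, βstar (d, j) = 0)
          ∨ (c < blockNorm r d ∧ ∀ j, βstar (d, j) = (1 - c / blockNorm r d) * r (d, j)) := by
        intro d
        by_cases hcase : blockNorm r d ≤ c
        · refine Or.inl ⟨hcase, fun j => ?_⟩
          have := hfp (d, j)
          rw [softThresh] at this
          simp only [if_pos hcase] at this
          rw [← this]; ring
        · push_neg at hcase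
          refine Or.inr ⟨hcase, fun j => ?_⟩
          have := hfp (d, j)
          rw [softThresh] at this
          simp only [if_neg (not_le.2 hcase)] at this
          exact this.symm
      have hcase2 : ∀ d, c < blockNorm r d →
          (∀ j, βstar (d, j) = (1 - c / blockNorm r d) * r (d, j)) →
          blockNorm βstar d = blockNorm r d - c := by
        intro d hcase hb
        have hρ : blockNorm r d ≠ 0 := ne_of_gt (lt_trans hc hcase)
        have hfac : (0:ℝ) ≤ 1 - c / blockNorm r d := by
          rw [sub_nonneg, div_le_one (lt_trans hc hcase)]; exact hcase.le
        rw [blockNorm_scale βstar r d _ hfac hb]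
        field_simp
      constructor
      · intro d hn
        rcases hchar d with ⟨hcase, _⟩ | ⟨hcase, hb⟩
        · have hz : ∀ j, βstar (d, j) = 0 := (blockNorm_eq_zero_iff βstar d).1 hn
          have hrg : ∀ j, r (d, j) = τ ^ 2 * -g (d, j) := fun j => by
            simp only [hrdef]; rw [hz j]; ring
          have hrn : blockNorm r d = τ ^ 2 * blockNorm g d := by
            rw [← blockNorm_neg g d]
            exact blockNorm_scale _ _ d (τ ^ 2) hτ2.le hrg
          rw [hrn, hcdef] at hcase
          nlinarith [blockNorm_nonneg g d]
        · exfalso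
          have := hcase2 d hcase hb
          rw [hn] at this
          linarith
      · intro d hn j
        rcases hchar d with ⟨_, hz⟩ | ⟨hcase, hb⟩
        · exact absurd ((blockNorm_eq_zero_iff βstar d).2 hz) hn
        · have hρpos : 0 < blockNorm r d := lt_trans hc hcase
          have hρ : blockNorm r d ≠ 0 := ne_of_gt hρpos
          have hnval : blockNorm βstar d = blockNorm r d - c := hcase2 d hcase hb
          have hgj : τ ^ 2 * g (d, j) = βstar (d, j) - r (d, j) := by
            simp only [hrdef]; ring
          have hb' : βstar (d, j) * blockNorm r d
              = (blockNorm r d - c) * r (d, j) := by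
            rw [hb j]; field_simp; try ring
          have e1 : τ ^ 2 * (blockNorm βstar d * g (d, j))
              = (blockNorm r d - c) * (βstar (d, j) - r (d, j)) := by
            rw [hnval, ← hgj]; ring
          have e2 : (blockNorm r d - c) * (βstar (d, j) - r (d, j))
              = -(c * βstar (d, j)) := by linear_combination hb'
          have e3 : τ ^ 2 * (blockNorm βstar d * g (d, j))
              = τ ^ 2 * (-(lam * βstar (d, j))) := by
            rw [e1, e2, hcdef]; ring
          exact mul_left_cancel₀ (ne_of_gt hτ2) e3
    · rintro ⟨hk1, hk2⟩ p
      obtain ⟨d, j⟩ := p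
      by_cases hn : blockNorm βstar d = 0
      · have hz : ∀ j, βstar (d, j) = 0 := (blockNorm_eq_zero_iff βstar d).1 hn
        have hrg : ∀ j', r (d, j') = τ ^ 2 * -g (d, j') := fun j' => by
          simp only [hrdef]; rw [hz j']; ring
        have hrn : blockNorm r d = τ ^ 2 * blockNorm g d := by
          rw [← blockNorm_neg g d]
          exact blockNorm_scale _ _ d (τ ^ 2) hτ2.le hrg
        have hle : blockNorm r d ≤ c := by
          rw [hrn, hcdef]
          nlinarith [hk1 d hn]
        rw [softThresh]
        simp only [if_pos hle]
        rw [hz j]; ring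
      · have hnpos : 0 < blockNorm βstar d :=
          lt_of_le_of_ne (blockNorm_nonneg _ _) (Ne.symm hn)
        have hrb : ∀ j', r (d, j')
            = ((blockNorm βstar d + c) / blockNorm βstar d) * βstar (d, j') := by
          intro j'
          have hmul : blockNorm βstar d * r (d, j')
              = (blockNorm βstar d + c) * βstar (d, j') := by
            simp only [hrdef]
            linear_combination (-(τ ^ 2)) * hk2 d hn j' - βstar (d, j') * hcdef
          field_simp
          linarith [hmul]
        have hrn : blockNorm r d = blockNorm βstar d + c := by
          rw [blockNorm_scale r βstar d _ (by positivity) hrb]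
          field_simp
        have hgt : ¬ blockNorm r d ≤ c := by rw [hrn]; push_neg; linarith
        rw [softThresh]
        simp only [if_neg hgt]
        rw [hrn, hrb j]
        have hne2 : blockNorm βstar d + c ≠ 0 := by positivity
        field_simp
        ring
  rw [hfix_iff, fixKKT]
  exact ⟨main, conv⟩
end

section
/- Let E be a real inner product space and τ ≥ 0. Define the soft-thresholding map S_τ : E → E by S_τ(x) = (1 − τ/‖x‖)·x if ‖x‖ > τ and S_τ(x) = 0 if ‖x‖ ≤ τ. Then S_τ is nonexpansive: for all x, y ∈ E, ‖S_τ(x) − S_τ(y)‖ ≤ ‖x − y‖. -/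
open RealInnerProductSpace

lemma st_aux {E : Type*} [NormedAddCommGroup E] [InnerProductSpace ℝ E]
    (τ : ℝ) (hτ : 0 ≤ τ) (x y : E) (hx : τ < ‖x‖) (hy : ‖y‖ ≤ τ) :
    ‖(1 - τ / ‖x‖) • x‖ ≤ ‖x - y‖ := by
  have hx0 : 0 < ‖x‖ := lt_of_le_of_lt hτ hx
  have h1 : ‖(1 - τ / ‖x‖) • x‖ = ‖x‖ - τ := by
    rw [norm_smul, Real.norm_eq_abs, abs_of_nonneg, sub_mul, one_mul,
      div_mul_cancel₀ _ hx0.ne']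
    rw [sub_nonneg, div_le_one hx0]
    exact hx.le
  rw [h1]
  have := norm_sub_norm_le x y
  linarith [norm_sub_norm_le x y]

lemma st_big {E : Type*} [NormedAddCommGroup E] [InnerProductSpace ℝ E]
    (τ : ℝ) (hτ : 0 ≤ τ) (x y : E) (hx : τ < ‖x‖) (hy : τ < ‖y‖) :
    ‖(1 - τ / ‖x‖) • x - (1 - τ / ‖y‖) • y‖ ≤ ‖x - y‖ := by
  have hx0 : 0 < ‖x‖ := lt_of_le_of_lt hτ hx
  have hy0 : 0 < ‖y‖ := lt_of_le_of_lt hτ hy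
  have hsq : ‖(1 - τ / ‖x‖) • x - (1 - τ / ‖y‖) • y‖ ^ 2 ≤ ‖x - y‖ ^ 2 := by
    rw [← real_inner_self_eq_norm_sq, ← real_inner_self_eq_norm_sq]
    simp only [inner_sub_sub_self, inner_smul_left, inner_smul_right,
      real_inner_self_eq_norm_sq, RCLike.ofReal_real_eq_id, id, conj_trivial]
    have hc : (inner ℝ x y : ℝ) ≤ ‖x‖ * ‖y‖ := real_inner_le_norm x y
    have hcomm : (inner ℝ y x : ℝ) = (inner ℝ x y : ℝ) := real_inner_comm x y
    rw [hcomm]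
    set a := ‖x‖; set b := ‖y‖; set c := (inner ℝ x y : ℝ)
    have key : 0 ≤ 2 * τ * (a * b - c) * (a + b - τ) :=
      mul_nonneg (mul_nonneg (by linarith) (by linarith)) (by linarith)
    have ha : a ≠ 0 := hx0.ne'
    have hb : b ≠ 0 := hy0.ne'
    rw [← sub_nonneg]
    have expand : (a ^ 2 - c - c + b ^ 2) -
        ((1 - τ / a) * ((1 - τ / a) * a ^ 2) - (1 - τ / b) * ((1 - τ / a) * c) -
          (1 - τ / a) * ((1 - τ / b) * c) + (1 - τ / b) * ((1 - τ / b) * b ^ 2)) =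
        (2 * τ * (a * b - c) * (a + b - τ)) / (a * b) := by
      field_simp
      ring
    rw [expand]
    exact div_nonneg key (by positivity)
  nlinarith [hsq, norm_nonneg ((1 - τ / ‖x‖) • x - (1 - τ / ‖y‖) • y), norm_nonneg (x - y)]

/-- Soft-thresholding `S_τ(x) = (1 − τ/‖x‖)·x` if `‖x‖ > τ`, else `0`, is nonexpansive
on a real inner product space. -/
theorem soft_threshold_nonexpansive {E : Type*} [NormedAddCommGroup E]
    [InnerProductSpace ℝ E] (τ : ℝ) (hτ : 0 ≤ τ)
    (S : E → E) (hS : ∀ x, S x = if ‖x‖ ≤ τ then 0 else (1 - τ / ‖x‖) • x) :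
    ∀ x y : E, ‖S x - S y‖ ≤ ‖x - y‖ := by
  intro x y
  rw [hS x, hS y]
  by_cases hxτ : ‖x‖ ≤ τ <;> by_cases hyτ : ‖y‖ ≤ τ
  · simp [hxτ, hyτ, norm_nonneg]
  · simp only [if_pos hxτ, if_neg hyτ, zero_sub, norm_neg]
    rw [← norm_neg (x - y), neg_sub]
    exact st_aux τ hτ y x (not_le.1 hyτ) hxτ
  · simp only [if_neg hxτ, if_pos hyτ, sub_zero]
    exact st_aux τ hτ x y (not_le.1 hxτ) hyτ
  · simp only [if_neg hxτ, if_neg hyτ]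
    exact st_big τ hτ x y (not_le.1 hxτ) (not_le.1 hyτ)
end

section
/- Let E be a real inner product space, let τ ≥ 0, and let x, y ∈ E satisfy ‖x‖ ≥ τ and ‖y‖ ≥ τ with x ≠ 0 and y ≠ 0. Then ‖(1 − τ/‖x‖)·x − (1 − τ/‖y‖)·y‖ ≤ ‖x − y‖. -/
/-- Case 3 of Theorem 1: soft-thresholding is nonexpansive on vectors whose norms
both exceed the threshold `τ`. -/
theorem soft_threshold_nonexpansive_outside_ball {E : Type*} [NormedAddCommGroup E]
    [InnerProductSpace ℝ E] (τ : ℝ) (hτ : 0 ≤ τ) (x y : E)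
    (hx : τ ≤ ‖x‖) (hy : τ ≤ ‖y‖) (hx0 : x ≠ 0) (hy0 : y ≠ 0) :
    ‖(1 - τ / ‖x‖) • x - (1 - τ / ‖y‖) • y‖ ≤ ‖x - y‖ := by
  have ha : (0:ℝ) < ‖x‖ := norm_pos_iff.mpr hx0
  have hb : (0:ℝ) < ‖y‖ := norm_pos_iff.mpr hy0
  have ht : inner ℝ x y ≤ ‖x‖ * ‖y‖ := real_inner_le_norm x y
  have hca : 0 ≤ 1 - τ / ‖x‖ := by
    have : τ / ‖x‖ ≤ 1 := (div_le_one ha).mpr hx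
    linarith
  have hcb : 0 ≤ 1 - τ / ‖y‖ := by
    have : τ / ‖y‖ ≤ 1 := (div_le_one hb).mpr hy
    linarith
  have key : ‖(1 - τ / ‖x‖) • x - (1 - τ / ‖y‖) • y‖ ^ 2 ≤ ‖x - y‖ ^ 2 := by
    rw [@norm_sub_sq_real, @norm_sub_sq_real, norm_smul, norm_smul,
      real_inner_smul_left, real_inner_smul_right, Real.norm_eq_abs, Real.norm_eq_abs,
      abs_of_nonneg hca, abs_of_nonneg hcb]
    have h1 : (τ / ‖x‖) * ‖x‖ = τ := div_mul_cancel₀ τ ha.ne'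
    have h2 : (τ / ‖y‖) * ‖y‖ = τ := div_mul_cancel₀ τ hb.ne'
    have hcoef : 0 ≤ τ / ‖x‖ + τ / ‖y‖ - (τ / ‖x‖) * (τ / ‖y‖) := by
      nlinarith [div_nonneg hτ ha.le, div_nonneg hτ hb.le,
        (div_le_one ha).mpr hx, (div_le_one hb).mpr hy]
    nlinarith [mul_nonneg (mul_nonneg hca hcb) (sub_nonneg.mpr ht),
      mul_le_mul_of_nonneg_left ht hcoef, hcoef]
  nlinarith [key, norm_nonneg ((1 - τ / ‖x‖) • x - (1 - τ / ‖y‖) • y), norm_nonneg (x - y)]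
end
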